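/- Let ψ : ℝ^d → ℝ be strictly convex and differentiable, and let data x_1,...,x_N ∈ ℝ^d, y_1,...,y_N ∈ ℝ define the affine set G = {w : ⟨w,x_n⟩ = y_n for all n}, assumed nonempty. If w* ∈ G satisfies ∇ψ(w*) - ∇ψ(w_0) ∈ span{x_1,...,x_N} for a given initialization w_0, then w* is the unique minimizer over G of the Bregman divergence D_ψ(w, w_0) = ψ(w) - ψ(w_0) - ⟨∇ψ(w_0), w - w_0⟩. -/

import Mathlib

open Filter Topology Finset
open scoped RealInnerProductSpace BigOperators

noncomputable section

abbrev Euc (d : ℕ) := EuclideanSpace ℝ (Fin d)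

/-- `N` is a norm on `ℝ^d`. -/
def IsNorm {d : ℕ} (N : Euc d → ℝ) : Prop :=
  (∀ v, N v = 0 ↔ v = 0) ∧ (∀ (c : ℝ) (v), N (c • v) = |c| * N v) ∧
  (∀ v w, N (v + w) ≤ N v + N w)

/-- Dual norm `‖y‖_* = sup_{‖v‖ ≤ 1} ⟨y, v⟩`. -/
def dualNorm {d : ℕ} (N : Euc d → ℝ) (y : Euc d) : ℝ :=
  sSup {s | ∃ v, N v ≤ 1 ∧ s = ⟪y, v⟫}

/-- Exponential-loss empirical objective `L(w) = ∑ n exp(-⟨w, x_n⟩)`. -/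
def expLoss {d N : ℕ} (x : Fin N → Euc d) (u : Euc d) : ℝ :=
  ∑ n, Real.exp (-⟪u, x n⟫)

/-- Negative gradient of the exponential loss: `-∇L(w) = ∑ n exp(-⟨w,x_n⟩) x_n`. -/
def negGrad {d N : ℕ} (x : Fin N → Euc d) (u : Euc d) : Euc d :=
  ∑ n, Real.exp (-⟪u, x n⟫) • x n
/-- Bregman divergence of ψ. -/
def breg {d : ℕ} (ψ : Euc d → ℝ) (w w' : Euc d) : ℝ :=
  ψ w - ψ w' - ⟪gradient ψ w', w - w'⟫

/-- Gradient inequality for strictly convex differentiable functions. -/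
lemma strict_grad_ineq {d : ℕ} (ψ : Euc d → ℝ)
    (hconv : StrictConvexOn ℝ Set.univ ψ) (hdiff : Differentiable ℝ ψ)
    (a b : Euc d) (hne : b ≠ a) : ⟪gradient ψ a, b - a⟫ < ψ b - ψ a := by
  set v : Euc d := b - a with hvdef
  have hv : v ≠ 0 := sub_ne_zero.mpr hne
  set g : ℝ → ℝ := fun t => ψ (a + t • v) with hgdef
  have hg : StrictConvexOn ℝ Set.univ g := by
    refine ⟨convex_univ, ?_⟩
    intro s _ t _ hst p q hp hq hpq
    have hne' : a + s • v ≠ a + t • v := by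
      intro h
      apply hst
      exact smul_left_injective ℝ hv (add_left_cancel h)
    have h1 : g (p • s + q • t) = ψ (p • (a + s • v) + q • (a + t • v)) := by
      simp only [hgdef]
      congr 1
      rw [smul_add, smul_add, smul_smul, smul_smul, add_add_add_comm, ← add_smul, hpq, one_smul,
        ← add_smul]
      simp
    rw [h1]
    exact hconv.2 (Set.mem_univ _) (Set.mem_univ _) hne' hp hq hpq
  have hline : HasDerivAt (fun t : ℝ => a + t • v) v (0 : ℝ) := by
    simpa using ((hasDerivAt_id (0 : ℝ)).smul_const v).const_add a
  have hψ : HasFDerivAt ψ (InnerProductSpace.toDual ℝ (Euc d) (gradient ψ a)) a :=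
    (hdiff a).hasGradientAt.hasFDerivAt
  have hψ' : HasFDerivAt ψ (InnerProductSpace.toDual ℝ (Euc d) (gradient ψ a))
      ((fun t : ℝ => a + t • v) 0) := by simpa using hψ
  have hcomp : HasDerivAt g (⟪gradient ψ a, v⟫) 0 := by
    have := hψ'.comp_hasDerivAt 0 hline
    exact this
  have := hg.lt_slope_of_hasDerivAt (Set.mem_univ (0 : ℝ)) (Set.mem_univ (1 : ℝ))
    zero_lt_one hcomp
  have hg0 : g 0 = ψ a := by simp [hgdef]
  have hg1 : g 1 = ψ b := by simp [hgdef, hvdef]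
  have h2 : slope g 0 1 = ψ b - ψ a := by
    rw [slope_def_field, hg0, hg1]; simp
  rw [h2] at this
  simpa using this

/-- if `w*` interpolates the data and `∇ψ(w*) - ∇ψ(w₀)` lies in the span of the
data, then `w*` is the unique minimizer of the Bregman divergence `D_ψ(·, w₀)` over the
interpolating set `G`. -/
theorem bregman_unique_minimizer {d N : ℕ} (ψ : Euc d → ℝ)
    (hconv : StrictConvexOn ℝ Set.univ ψ) (hdiff : Differentiable ℝ ψ)
    (x : Fin N → Euc d) (y : Fin N → ℝ) (w₀ wstar : Euc d)
    (hfeas : ∀ n, ⟪wstar, x n⟫ = y n)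
    (hstat : gradient ψ wstar - gradient ψ w₀ ∈ Submodule.span ℝ (Set.range x)) :
    ∀ w : Euc d, (∀ n, ⟪w, x n⟫ = y n) → w ≠ wstar →
      breg ψ wstar w₀ < breg ψ w w₀ := by
  intro w hw hne
  -- ⟪∇ψ(w*) - ∇ψ(w₀), w - w*⟫ = 0
  have horth : ⟪gradient ψ wstar - gradient ψ w₀, w - wstar⟫ = 0 := by
    have key : ∀ z ∈ Submodule.span ℝ (Set.range x), ⟪z, w - wstar⟫ = (0 : ℝ) := by
      intro z hz
      induction hz using Submodule.span_induction with
      | mem z hz =>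
        obtain ⟨n, rfl⟩ := hz
        rw [inner_sub_right, real_inner_comm w (x n), real_inner_comm wstar (x n),
          hw n, hfeas n, sub_self]
      | zero => simp
      | add z₁ z₂ _ _ h₁ h₂ => rw [inner_add_left, h₁, h₂, add_zero]
      | smul c z _ h => rw [real_inner_smul_left, h, mul_zero]
    exact key _ hstat
  have hkey : ⟪gradient ψ wstar, w - wstar⟫ < ψ w - ψ wstar :=
    strict_grad_ineq ψ hconv hdiff wstar w hne
  rw [inner_sub_left] at horth
  simp only [breg]
  have h1 : ⟪gradient ψ w₀, wstar - w₀⟫ = ⟪gradient ψ w₀, w - w₀⟫ - ⟪gradient ψ w₀, w - wstar⟫ := by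
    rw [← inner_sub_right]; congr 1; abel
  rw [h1]
  linarith

end
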